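/- The network VCG mechanism is not weakly budget balanced: on a line network with seller s at one end followed by l buyers, where the first l−1 buyers have valuation 0 and the last buyer has valuation 1, if all buyers act truthfully then the seller's total revenue under network VCG equals −(l−1), which is negative for l ≥ 2. -/

import Mathlib

/-- A diffusion path from the seller `s` to agent `j`: a nonempty list starting at `s`,
ending at `j`, in which each agent passes the information to the next one
(i.e. the next agent belongs to the diffusion set of the previous one). -/
def IsDiffPath {N : Type} (σ : N → Finset N) (s j : N) (p : List N) : Prop :=
  p ≠ [] ∧ p.head? = some s ∧ p.getLast? = some j ∧ List.Chain' (fun a b => b ∈ σ a) p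

/-- Agent `j` is informed if some diffusion path from the seller reaches her. -/
def Informed {N : Type} (σ : N → Finset N) (s j : N) : Prop :=
  ∃ p, IsDiffPath σ s j p

/-- Buyer `i` is a diffusion critical node of buyer `j`: `j` is informed and every
diffusion path from the seller `s` to `j` passes through `i` (and `i ≠ j`). -/
def Critical {N : Type} (σ : N → Finset N) (s i j : N) : Prop :=
  i ≠ j ∧ Informed σ s j ∧ ∀ p, IsDiffPath σ s j p → i ∈ p

/-- `d_i`: buyer `i` together with all buyers having `i` as a diffusion critical node. -/
def dset {N : Type} (σ : N → Finset N) (s i : N) : Set N :=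
  {i} ∪ {j | Critical σ s i j}

/-- The highest reported valuation among the buyers in `B` (zero if `B` is empty). -/
noncomputable def maxBid (v : ℕ → ℝ) (B : Finset ℕ) : ℝ :=
  B.fold max 0 v

/-- Truthful diffusion on the line network `s = 0 — 1 — 2 — ⋯ — l`:
every agent passes the information to all her neighbors. -/
def lineσ (l : ℕ) : ℕ → Finset ℕ :=
  fun k => if k = 0 then {1} else if k < l then {k - 1, k + 1} else {l - 1}

/-- Valuations on the line: buyers `1, …, l−1` value the item at `0`, buyer `l` at `1`. -/
noncomputable def lineV (l : ℕ) : ℕ → ℝ :=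
  fun k => if k = l then 1 else 0

open Classical in
/-- `d_k` on the line network: buyer `k` together with all buyers of `{1,…,l}` having `k`
as a diffusion critical node. -/
noncomputable def lineD (l k : ℕ) : Finset ℕ :=
  (Finset.Icc 1 l).filter (fun j => j = k ∨ Critical (lineσ l) 0 k j)

lemma step_le (l a b : ℕ) (hb : b ∈ lineσ l a) : b ≤ a + 1 := by
  unfold lineσ at hb
  split_ifs at hb with h1 h2
  · simp at hb; omega
  · simp [Finset.mem_insert] at hb; omega
  · simp at hb; omega

lemma ivt (k : ℕ) : ∀ p : List ℕ, List.Chain' (fun a b => b ≤ a + 1) p →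
    ∀ a, p.head? = some a → a ≤ k → ∀ j ∈ p, k ≤ j → k ∈ p := by
  intro p
  induction p with
  | nil => intro _ a ha; simp at ha
  | cons a rest ih =>
    intro hc x hx hxk j hj hkj
    simp at hx; subst hx
    rcases Nat.eq_or_lt_of_le hxk with h | h
    · subst h; exact List.mem_cons_self
    · have hja : j ∈ rest := by
        rcases List.mem_cons.mp hj with rfl | h'
        · omega
        · exact h'
      cases rest with
      | nil => simp at hja
      | cons b rest' =>
        have hba : b ≤ a + 1 := (List.isChain_cons_cons.mp hc).1
        have := ih (List.isChain_cons_cons.mp hc).2 b rfl (by omega) j hja hkj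
        exact List.mem_cons_of_mem _ this

lemma informed_line (l : ℕ) (hl : 1 ≤ l) : IsDiffPath (lineσ l) 0 l (List.range (l + 1)) := by
  refine ⟨by simp, ?_, ?_, ?_⟩
  · rw [List.range_succ_eq_map]; rfl
  · rw [List.getLast?_eq_getLast (by simp), List.getLast_range]
    simp
  · show List.IsChain _ _; rw [List.isChain_range_succ]
    intro m hm
    unfold lineσ
    split_ifs with h1 h2 <;> simp <;> omega

lemma critical_line (l k : ℕ) (hk : 1 ≤ k) (hkl : k < l) : Critical (lineσ l) 0 k l := by
  refine ⟨by omega, ⟨_, informed_line l (by omega)⟩, ?_⟩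
  rintro p ⟨hne, hh, hlast, hc⟩
  have hchain : List.Chain' (fun a b => b ≤ a + 1) p :=
    List.IsChain.imp (fun ⦃a b⦄ hb => step_le l a b hb) hc
  have hlmem : l ∈ p := by
    rw [List.getLast?_eq_getLast hne] at hlast
    exact (Option.some_injective _ hlast) ▸ List.getLast_mem hne
  exact ivt k p hchain 0 hh (by omega) l hlmem (by omega)

lemma maxBid_zero (v : ℕ → ℝ) (B : Finset ℕ) (h : ∀ x ∈ B, v x = 0) : maxBid v B = 0 := by
  unfold maxBid
  refine le_antisymm ((Finset.fold_max_le _).mpr ⟨le_refl 0, fun x hx => (h x hx).le⟩) ?_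
  exact (Finset.le_fold_max _).mpr (Or.inl le_rfl)

lemma maxBid_line (l : ℕ) (hl : 1 ≤ l) : maxBid (lineV l) (Finset.Icc 1 l) = 1 := by
  unfold maxBid
  refine le_antisymm ((Finset.fold_max_le _).mpr ⟨zero_le_one, fun x _ => ?_⟩)
    ((Finset.le_fold_max _).mpr (Or.inr ⟨l, by simp [hl], by simp [lineV]⟩))
  unfold lineV; split_ifs <;> norm_num

/-- network VCG is not weakly budget balanced.  On the line network with the
seller at one end followed by `l ≥ 2` buyers, where only the last buyer has valuation `1`
and all others have valuation `0`, under truthful actions the seller's revenue (the sum of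
all VCG payments `W(a_{-d_i}) − (W(a) − π*_i(a)·v_i)`, the item going to buyer `l`) equals
`−(l−1) < 0`. -/
theorem vcg_not_weakly_budget_balanced (l : ℕ) (hl : 2 ≤ l) :
    (∑ k ∈ Finset.Icc 1 l,
        (maxBid (lineV l) (Finset.Icc 1 l \ lineD l k)
          - (maxBid (lineV l) (Finset.Icc 1 l)
              - (if k = l then lineV l k else 0))))
      = -((l : ℝ) - 1)
    ∧ (∑ k ∈ Finset.Icc 1 l,
        (maxBid (lineV l) (Finset.Icc 1 l \ lineD l k)
          - (maxBid (lineV l) (Finset.Icc 1 l)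
              - (if k = l then lineV l k else 0)))) < 0 := by
  have h1 : maxBid (lineV l) (Finset.Icc 1 l) = 1 := maxBid_line l (by omega)
  have hmem : ∀ k ∈ Finset.Icc 1 l, l ∈ lineD l k := by
    intro k hk
    rw [Finset.mem_Icc] at hk
    simp only [lineD, Finset.mem_filter, Finset.mem_Icc]
    refine ⟨⟨by omega, le_rfl⟩, ?_⟩
    rcases eq_or_lt_of_le hk.2 with h | h
    · exact Or.inl h.symm
    · exact Or.inr (critical_line l k hk.1 h)
  have hterm : ∀ k ∈ Finset.Icc 1 l,
      maxBid (lineV l) (Finset.Icc 1 l \ lineD l k) = 0 := by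
    intro k hk
    apply maxBid_zero
    intro x hx
    rw [Finset.mem_sdiff] at hx
    have hxl : x ≠ l := fun h => hx.2 (h ▸ hmem k hk)
    simp [lineV, hxl]
  have e : ∀ k ∈ Finset.Icc 1 l,
      (maxBid (lineV l) (Finset.Icc 1 l \ lineD l k)
          - (maxBid (lineV l) (Finset.Icc 1 l)
              - (if k = l then lineV l k else 0)))
        = (if k = l then (1 : ℝ) else 0) - 1 := by
    intro k hk
    rw [hterm k hk, h1]
    by_cases h : k = l <;> simp [lineV, h]
  have key : (∑ k ∈ Finset.Icc 1 l,
        (maxBid (lineV l) (Finset.Icc 1 l \ lineD l k)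
          - (maxBid (lineV l) (Finset.Icc 1 l)
              - (if k = l then lineV l k else 0)))) = 1 - (l : ℝ) := by
    rw [Finset.sum_congr rfl e, Finset.sum_sub_distrib,
      Finset.sum_ite_eq' (Finset.Icc 1 l) l (fun _ => (1 : ℝ))]
    simp [Nat.card_Icc, hl]
    omega
  constructor
  · rw [key]; ring
  · rw [key]
    have h2 : (2 : ℝ) ≤ l := by exact_mod_cast hl
    linarith
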